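/- For n ≥ 2 and V with V'(x) = x^n(n+1+sin x) on x ≥ 0, the function u(x) = e^{V(x)} ∫_x^∞ (y − m) e^{-V(y)} dy tends to 0 as x → +∞, for any constant m. -/

import Mathlib

set_option maxHeartbeats 1000000

open Real MeasureTheory Set Filter

theorem u_tendsto_zero (n : ℕ) (hn : 2 ≤ n) (m : ℝ) (V : ℝ → ℝ)
    (hV0 : V 0 = 0)
    (hV : ∀ x : ℝ, 0 ≤ x → HasDerivAt V (x ^ n * ((n : ℝ) + 1 + Real.sin x)) x)
    (hVc : ContinuousOn (deriv V) (Set.Ici (0 : ℝ)))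
    (hint : IntegrableOn (fun y => (y - m) * Real.exp (-V y)) (Set.Ici (0 : ℝ))) :
    Tendsto (fun x : ℝ => Real.exp (V x) * ∫ y in Set.Ici x, (y - m) * Real.exp (-V y))
      atTop (nhds 0) := by
  have hn2 : (2 : ℝ) ≤ (n : ℝ) := by exact_mod_cast hn
  -- Key derivative bound: V y - V x ≥ n x^n (y - x) for 0 ≤ x ≤ y
  have key : ∀ x y : ℝ, 0 ≤ x → x ≤ y → (n : ℝ) * x ^ n * (y - x) ≤ V y - V x := by
    intro x y hx hxy
    set c : ℝ := (n : ℝ) * x ^ n with hc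
    have hd : ∀ t : ℝ, 0 ≤ t → HasDerivAt (fun t => V t - c * t)
        (t ^ n * ((n : ℝ) + 1 + Real.sin t) - c) t := by
      intro t ht
      exact ((hV t ht).sub ((hasDerivAt_id' t).const_mul c)).congr_deriv (by ring)
    have hmono : MonotoneOn (fun t => V t - c * t) (Ici x) := by
      apply monotoneOn_of_hasDerivWithinAt_nonneg (convex_Ici x)
        (f' := fun t => t ^ n * ((n : ℝ) + 1 + Real.sin t) - c)
      · intro t ht
        exact (hd t (hx.trans ht)).continuousAt.continuousWithinAt
      · intro t ht
        rw [interior_Ici] at ht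
        exact (hd t (hx.trans ht.le)).hasDerivWithinAt
      · intro t ht
        rw [interior_Ici] at ht
        have h1 : x ^ n ≤ t ^ n := pow_le_pow_left₀ hx ht.le n
        have h2 : (-1 : ℝ) ≤ Real.sin t := neg_one_le_sin t
        have h3 : (0:ℝ) ≤ t ^ n := pow_nonneg (hx.trans ht.le) n
        have h4 : (n : ℝ) * x ^ n ≤ (n : ℝ) * t ^ n := by nlinarith
        nlinarith
    have h := hmono (self_mem_Ici) (mem_Ici.mpr hxy) hxy
    simp only [] at h
    have : c * (y - x) = c * y - c * x := mul_sub c y x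
    linarith
  -- squeeze
  apply squeeze_zero' (g := fun x => (2 + |m|) / x)
  · filter_upwards [eventually_ge_atTop (max m 1)] with x hx
    have hxm : m ≤ x := le_trans (le_max_left _ _) hx
    have hx0 : (0:ℝ) ≤ x := le_trans (by positivity) (le_trans (le_max_right _ _) hx)
    apply mul_nonneg (Real.exp_pos _).le
    apply setIntegral_nonneg measurableSet_Ici
    intro y hy
    exact mul_nonneg (by simp only [mem_Ici] at hy; linarith) (Real.exp_pos _).le
  · filter_upwards [eventually_ge_atTop (max m 1)] with x hx
    have hxm : m ≤ x := le_trans (le_max_left _ _) hx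
    have hx1 : (1:ℝ) ≤ x := le_trans (le_max_right _ _) hx
    have hx0 : (0:ℝ) ≤ x := by linarith
    set b : ℝ := (n : ℝ) * x ^ n - 1 with hb
    have hxn1 : (1:ℝ) ≤ x ^ n := by calc (1:ℝ) = 1 ^ n := (one_pow n).symm
      _ ≤ x ^ n := pow_le_pow_left₀ (by norm_num) hx1 n
    have hbpos : 0 < b := by nlinarith
    -- rewrite u x as a single integral
    have heq : Real.exp (V x) * ∫ y in Set.Ici x, (y - m) * Real.exp (-V y)
        = ∫ y in Set.Ici x, (y - m) * Real.exp (V x - V y) := by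
      rw [← integral_const_mul]
      congr 1
      funext y
      rw [Real.exp_sub, Real.exp_neg]
      field_simp
    rw [heq]
    -- integrability facts
    have hintL : IntegrableOn (fun y => (y - m) * Real.exp (V x - V y)) (Ici x) := by
      have : (fun y => (y - m) * Real.exp (V x - V y))
          = fun y => Real.exp (V x) * ((y - m) * Real.exp (-V y)) := by
        funext y; rw [Real.exp_sub, Real.exp_neg]; field_simp
      rw [this]
      exact (hint.mono_set (Ici_subset_Ici.2 hx0)).const_mul _
    have hintR : IntegrableOn (fun y => (x - m + 1) * Real.exp (-(b * (y - x)))) (Ici x) := by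
      have : (fun y : ℝ => (x - m + 1) * Real.exp (-(b * (y - x))))
          = fun y : ℝ => ((x - m + 1) * Real.exp (b * x)) * Real.exp (-b * y) := by
        funext y; rw [mul_assoc, ← Real.exp_add]; ring_nf
      rw [this, integrableOn_Ici_iff_integrableOn_Ioi]
      exact (exp_neg_integrableOn_Ioi x hbpos).const_mul _
    -- pointwise bound
    have hpt : ∀ y ∈ Ici x, (y - m) * Real.exp (V x - V y)
        ≤ (x - m + 1) * Real.exp (-(b * (y - x))) := by
      intro y hy
      rw [mem_Ici] at hy
      have hk := key x y hx0 hy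
      have h1 : Real.exp (V x - V y) ≤ Real.exp (-((n : ℝ) * x ^ n * (y - x))) :=
        Real.exp_le_exp.2 (by linarith)
      have h2 : y - m ≤ (x - m + 1) * Real.exp (y - x) := by
        nlinarith [Real.add_one_le_exp (y - x), Real.exp_pos (y - x)]
      calc (y - m) * Real.exp (V x - V y)
          ≤ ((x - m + 1) * Real.exp (y - x)) * Real.exp (-((n : ℝ) * x ^ n * (y - x))) := by
            apply mul_le_mul h2 h1 (Real.exp_pos _).le
            exact mul_nonneg (by linarith) (Real.exp_pos _).le
        _ = (x - m + 1) * Real.exp (-(b * (y - x))) := by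
            rw [mul_assoc, ← Real.exp_add]
            congr 2
            rw [hb]; ring
    have hle := setIntegral_mono_on hintL hintR measurableSet_Ici hpt
    -- compute the right integral
    have hval : ∫ y in Set.Ici x, (x - m + 1) * Real.exp (-(b * (y - x)))
        = (x - m + 1) * (1 / b) := by
      rw [integral_Ici_eq_integral_Ioi, integral_const_mul]
      congr 1
      have hF : ∀ y ∈ Ioi x, HasDerivAt (fun y : ℝ => -(1 / b) * Real.exp (-(b * (y - x))))
          (Real.exp (-(b * (y - x)))) y := by
        intro y _
        have h0 : HasDerivAt (fun y : ℝ => -(b * (y - x))) (-b) y := by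
          have := ((hasDerivAt_id y).sub_const x).const_mul b
          exact this.neg.congr_deriv (by ring)
        have := (h0.exp).const_mul (-(1 / b))
        refine this.congr_deriv ?_
        have hb0 : b ≠ 0 := hbpos.ne'
        field_simp
      have hT : Tendsto (fun y : ℝ => -(1 / b) * Real.exp (-(b * (y - x)))) atTop (nhds 0) := by
        have h1 : Tendsto (fun y : ℝ => -(b * (y - x))) atTop atBot := by
          apply tendsto_neg_atTop_atBot.comp
          exact (tendsto_atTop_add_const_right atTop (-x) tendsto_id).const_mul_atTop hbpos
        have := (Real.tendsto_exp_atBot.comp h1).const_mul (-(1 / b))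
        simpa using this
      have hI : IntegrableOn (fun y : ℝ => Real.exp (-(b * (y - x)))) (Ioi x) := by
        have := hintR.mono_set Ioi_subset_Ici_self
        have h2 : (fun y : ℝ => Real.exp (-(b * (y - x))))
            = fun y : ℝ => Real.exp (b * x) * Real.exp (-b * y) := by
          funext y; rw [← Real.exp_add]; ring_nf
        rw [h2]
        exact (exp_neg_integrableOn_Ioi x hbpos).const_mul _
      have := integral_Ioi_of_hasDerivAt_of_tendsto
        (f := fun y : ℝ => -(1 / b) * Real.exp (-(b * (y - x))))
        (f' := fun y : ℝ => Real.exp (-(b * (y - x))))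
        (Continuous.continuousWithinAt (by continuity)) hF hI hT
      rw [this]
      simp
    rw [hval] at hle
    refine hle.trans ?_
    -- (x - m + 1)/b ≤ (2+|m|)/x
    have hxx : x ^ 2 ≤ x ^ n := pow_le_pow_right₀ hx1 hn
    have hbx : x ^ 2 ≤ b := by nlinarith
    have hnum : x - m + 1 ≤ (2 + |m|) * x := by
      have := neg_abs_le m
      nlinarith [abs_nonneg m]
    have hxpos : (0:ℝ) < x := by linarith
    have : (x - m + 1) * (1 / b) = (x - m + 1) / b := by ring
    rw [this]
    calc (x - m + 1) / b ≤ ((2 + |m|) * x) / x ^ 2 := by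
          apply div_le_div₀ (by positivity) hnum (by positivity) hbx
      _ = (2 + |m|) / x := by
          rw [pow_two]
          rw [mul_div_mul_right _ _ (ne_of_gt hxpos)]
  · exact tendsto_const_nhds.div_atTop tendsto_id
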